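/- Let (B, ω) be a symplectic vector space, A ⊆ B a subspace, and v ∈ A^⊥ω \ A. Then A ⊆ v^⊥ω, and any codimension-1 subspace C of v^⊥ω that contains A and does not contain v is ω-orthogonal to v. Moreover if A is not coisotropic and codim A ≥ 3, such a C of codimension 2 in B exists and is symplectic. -/

import Mathlib

/-- If `v ∈ A^⊥ω \ A`, then `A ⊆ v^⊥ω`; any subspace `C` of `v^⊥ω`
containing `A` with `v ∉ C` is `ω`-orthogonal to `v`; and if moreover
`codim A ≥ 3` (so that `A` is not coisotropic thanks to `v`), there is such a `C`
of codimension 2 in `B` which is symplectic. -/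
theorem stmt1 {B : Type*} [AddCommGroup B] [Module ℝ B] [FiniteDimensional ℝ B]
    (ω : LinearMap.BilinForm ℝ B)
    (hnd : ω.Nondegenerate)
    (halt : ∀ v : B, ω v v = 0)
    (A : Submodule ℝ B) (v : B)
    (hv : v ∈ ω.orthogonal A) (hvA : v ∉ A)
    (hcodim : Module.finrank ℝ A + 3 ≤ Module.finrank ℝ B) :
    A ≤ ω.orthogonal (Submodule.span ℝ {v}) ∧
    (∀ C : Submodule ℝ B, A ≤ C → C ≤ ω.orthogonal (Submodule.span ℝ {v}) →
      v ∉ C → ∀ c ∈ C, ω v c = 0) ∧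
    (∃ C : Submodule ℝ B, A ≤ C ∧ C ≤ ω.orthogonal (Submodule.span ℝ {v}) ∧
      v ∉ C ∧ Module.finrank ℝ C + 2 = Module.finrank ℝ B ∧
      (ω.restrict C).Nondegenerate) := by
  have halt' : ω.IsAlt := halt
  have hrefl : ω.IsRefl := halt'.isRefl
  -- part 1
  have h1 : A ≤ ω.orthogonal (Submodule.span ℝ {v}) := by
    intro a ha x hx
    rcases Submodule.mem_span_singleton.mp hx with ⟨c, rfl⟩
    have : ω v a = 0 := hrefl _ _ (hv a ha)
    simp [LinearMap.BilinForm.IsOrtho, this]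
  refine ⟨h1, ?_, ?_⟩
  · -- part 2
    intro C _ hC _ c hc
    exact hC hc v (Submodule.mem_span_singleton_self v)
  -- part 3: find w ∈ A^⊥ with ω w v ≠ 0
  have hvo : v ∉ ω.orthogonal (ω.orthogonal A) := by
    rw [ω.orthogonal_orthogonal hnd hrefl A]; exact hvA
  rw [LinearMap.BilinForm.mem_orthogonal_iff] at hvo
  push_neg at hvo
  obtain ⟨w, hwA, hwv⟩ := hvo
  have hwv : ω w v ≠ 0 := hwv
  set W : Submodule ℝ B := Submodule.span ℝ ({v, w} : Set B) with hW
  have hvW : v ∈ W := Submodule.subset_span (by simp)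
  have hwW : w ∈ W := Submodule.subset_span (by simp)
  have hvw : ω v w ≠ 0 := fun h => hwv (by simpa using hrefl _ _ h)
  -- ω restricted to W is nondegenerate
  have hWnd : (ω.restrict W).Nondegenerate := by
    refine (LinearMap.IsRefl.nondegenerate_iff_separatingLeft (B := ω.restrict W) (fun x y h => hrefl _ _ h)).mpr ?_
    rintro ⟨x, hx⟩ hxy
    rcases Submodule.mem_span_pair.mp hx with ⟨a, b, rfl⟩
    have h1 : ω (a • v + b • w) v = 0 := hxy ⟨v, hvW⟩
    have h2 : ω (a • v + b • w) w = 0 := hxy ⟨w, hwW⟩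
    simp only [map_add, map_smul, LinearMap.add_apply, LinearMap.smul_apply, smul_eq_mul,
      halt v, halt w, mul_zero, add_zero, zero_add] at h1 h2
    have hb : b = 0 := by
      rcases mul_eq_zero.mp h1 with h | h
      · exact h
      · exact absurd h hwv
    have ha : a = 0 := by
      rcases mul_eq_zero.mp h2 with h | h
      · exact h
      · exact absurd h hvw
    ext
    simp [ha, hb]
  have hcompl : IsCompl W (ω.orthogonal W) :=
    (ω.restrict_nondegenerate_iff_isCompl_orthogonal hrefl).mp hWnd
  set C := ω.orthogonal W with hC
  -- finrank W = 2
  have hind : LinearIndependent ℝ ![v, w] := by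
    rw [LinearIndependent.pair_iff]
    intro s t hst
    have h1 : ω w (s • v + t • w) = 0 := by rw [hst]; simp
    have h2 : ω v (s • v + t • w) = 0 := by rw [hst]; simp
    simp only [map_add, map_smul, smul_eq_mul, halt v, halt w, mul_zero, add_zero,
      zero_add] at h1 h2
    constructor
    · rcases mul_eq_zero.mp h1 with h | h
      · exact h
      · exact absurd h hwv
    · rcases mul_eq_zero.mp h2 with h | h
      · exact h
      · exact absurd h hvw
  have hrange : Set.range ![v, w] = ({v, w} : Set B) := by
    ext x
    simp [Fin.exists_fin_two, or_comm]
  have hfW : Module.finrank ℝ W = 2 := by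
    rw [hW, ← hrange, finrank_span_eq_card hind]
    simp
  have hfin : Module.finrank ℝ C + 2 = Module.finrank ℝ B := by
    have := Submodule.finrank_add_eq_of_isCompl hcompl
    omega
  refine ⟨C, ?_, ?_, ?_, hfin, ?_⟩
  · -- A ≤ C
    intro a ha x hx
    have hker : Submodule.span ℝ ({v, w} : Set B) ≤ LinearMap.ker (ω.flip a) := by
      rw [Submodule.span_le]
      rintro y (rfl | rfl)
      · simpa using hrefl _ _ (hv a ha)
      · simpa using hrefl _ _ (hwA a ha)
    simpa using hker hx
  · exact LinearMap.BilinForm.orthogonal_le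
      (Submodule.span_le.mpr (by rintro y rfl; exact hvW))
  · intro hvC
    exact hwv (hvC w hwW)
  · -- nondegenerate restriction to C
    refine (LinearMap.IsRefl.nondegenerate_iff_separatingLeft (B := ω.restrict C) (fun x y h => hrefl _ _ h)).mpr ?_
    rintro ⟨c, hc⟩ hcy
    have hker : ∀ x : B, ω c x = 0 := by
      intro x
      obtain ⟨y, z, hy, hz, rfl⟩ := Submodule.codisjoint_iff_exists_add_eq.mp hcompl.codisjoint x
      have hy' : ω c y = 0 := hrefl _ _ (hc y hy)
      have hz' : ω c z = 0 := hcy ⟨z, hz⟩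
      rw [map_add, hy', hz', add_zero]
    have : c = 0 := hnd.1 c hker
    ext
    simp [this]
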